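/- arXiv:2101.11293 — 7 statements merged into one kernel-verified Lean document; each statement's English description precedes it below -/
import Mathlib

section
/- For every real number r ≥ 1 and all vectors x, y in a real inner product space E, one has ⟪‖x‖^(r-1)·x − ‖y‖^(r-1)·y, x − y⟫ ≥ (1/2)‖x‖^(r-1)‖x − y‖² + (1/2)‖y‖^(r-1)‖x − y‖²; in particular the left-hand side is nonnegative. -/
/-- Pointwise monotonicity estimate (2.23) for the Forchheimer nonlinearity
`C_r(x) = ‖x‖^(r-1) • x`: for `r ≥ 1`,
`⟪C_r(x) - C_r(y), x - y⟫ ≥ ½‖x‖^(r-1)‖x-y‖² + ½‖y‖^(r-1)‖x-y‖² ≥ 0`. -/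
theorem forchheimer_pointwise_monotonicity
    {E : Type*} [NormedAddCommGroup E] [InnerProductSpace ℝ E]
    (r : ℝ) (hr : 1 ≤ r) (x y : E) :
    (1 / 2 : ℝ) * ‖x‖ ^ (r - 1) * ‖x - y‖ ^ 2
        + (1 / 2 : ℝ) * ‖y‖ ^ (r - 1) * ‖x - y‖ ^ 2
      ≤ (inner ℝ ((‖x‖ ^ (r - 1) : ℝ) • x - (‖y‖ ^ (r - 1) : ℝ) • y) (x - y) : ℝ)
    ∧ (0 : ℝ) ≤ (inner ℝ ((‖x‖ ^ (r - 1) : ℝ) • x - (‖y‖ ^ (r - 1) : ℝ) • y) (x - y) : ℝ) := by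
  set a : ℝ := ‖x‖ ^ (r - 1) with ha
  set b : ℝ := ‖y‖ ^ (r - 1) with hb
  have ha0 : 0 ≤ a := Real.rpow_nonneg (norm_nonneg x) _
  have hb0 : 0 ≤ b := Real.rpow_nonneg (norm_nonneg y) _
  have hr0 : 0 ≤ r - 1 := by linarith
  have key : 0 ≤ (a - b) * (‖x‖ ^ 2 - ‖y‖ ^ 2) := by
    rcases le_total ‖x‖ ‖y‖ with h | h
    · have h1 : a ≤ b := Real.rpow_le_rpow (norm_nonneg x) h hr0
      have h2 := pow_le_pow_left₀ (norm_nonneg x) h 2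
      nlinarith
    · have h1 : b ≤ a := Real.rpow_le_rpow (norm_nonneg y) h hr0
      have h2 := pow_le_pow_left₀ (norm_nonneg y) h 2
      nlinarith
  have hinner : (inner ℝ (a • x - b • y) (x - y) : ℝ)
      = a * ‖x‖ ^ 2 - (a + b) * (inner ℝ x y : ℝ) + b * ‖y‖ ^ 2 := by
    simp only [inner_sub_left, inner_sub_right, real_inner_smul_left,
      real_inner_self_eq_norm_sq, real_inner_comm y x]
    try ring
  have hnorm : ‖x - y‖ ^ 2 = ‖x‖ ^ 2 - 2 * (inner ℝ x y : ℝ) + ‖y‖ ^ 2 := by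
    rw [norm_sub_sq_real]; try ring
  have h1 : (1 / 2 : ℝ) * a * ‖x - y‖ ^ 2 + (1 / 2 : ℝ) * b * ‖x - y‖ ^ 2
      ≤ (inner ℝ (a • x - b • y) (x - y) : ℝ) := by
    rw [hinner, hnorm]; nlinarith [key]
  refine ⟨h1, le_trans ?_ h1⟩
  have := mul_nonneg (mul_nonneg (by norm_num : (0:ℝ) ≤ 1/2) ha0) (sq_nonneg ‖x - y‖)
  have := mul_nonneg (mul_nonneg (by norm_num : (0:ℝ) ≤ 1/2) hb0) (sq_nonneg ‖x - y‖)
  linarith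
end

section
/- For every real number r ≥ 1 and all vectors x, y in a real inner product space E, one has ‖ ‖x‖^(r-1)·x − ‖y‖^(r-1)·y ‖ ≤ r · (‖x‖ + ‖y‖)^(r-1) · ‖x − y‖. -/
open Real

private lemma key_ineq {a b p : ℝ} (hb : 0 ≤ b) (hba : b ≤ a) (hp : 0 ≤ p) :
    b * (a ^ p - b ^ p) ≤ p * a ^ p * (a - b) := by
  have ha0 : 0 ≤ a := hb.trans hba
  rcases eq_or_lt_of_le hb with hb0 | hb0
  · rw [← hb0, zero_mul, sub_zero]
    exact mul_nonneg (mul_nonneg hp (Real.rpow_nonneg ha0 p)) ha0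
  have ha : 0 < a := lt_of_lt_of_le hb0 hba
  have hs : (-1 : ℝ) ≤ b / a - 1 := by
    have : 0 ≤ b / a := by positivity
    linarith
  have hbern := one_add_mul_self_le_rpow_one_add hs (by linarith : (1:ℝ) ≤ p + 1)
  have h1 : (1 + (b / a - 1)) = b / a := by ring
  rw [h1, div_rpow hb ha.le] at hbern
  have hap : a ^ (p + 1) = a ^ p * a := by
    rw [Real.rpow_add ha, Real.rpow_one]
  have hbp : b ^ (p + 1) = b ^ p * b := by
    rw [Real.rpow_add hb0, Real.rpow_one]
  have hapos : (0:ℝ) < a ^ (p + 1) := Real.rpow_pos_of_pos ha _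
  have h2 : (1 + (p + 1) * (b / a - 1)) * a ^ (p + 1) ≤ b ^ (p + 1) := by
    calc (1 + (p + 1) * (b / a - 1)) * a ^ (p + 1)
        ≤ (b ^ (p + 1) / a ^ (p + 1)) * a ^ (p + 1) := by
          apply mul_le_mul_of_nonneg_right hbern hapos.le
      _ = b ^ (p + 1) := by field_simp
  have h4 : (1 + (p + 1) * (b / a - 1)) * a ^ (p + 1)
      = a ^ p * a + (p + 1) * a ^ p * (b - a) := by
    rw [hap]; field_simp
  rw [h4, hbp] at h2
  nlinarith [h2]


private lemma forch_aux {E : Type*} [NormedAddCommGroup E] [InnerProductSpace ℝ E]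
    (r : ℝ) (hr : 1 ≤ r) (x y : E) (hxy : ‖y‖ ≤ ‖x‖) :
    ‖(‖x‖ ^ (r - 1) : ℝ) • x - (‖y‖ ^ (r - 1) : ℝ) • y‖
      ≤ r * (‖x‖ + ‖y‖) ^ (r - 1) * ‖x - y‖ := by
  set p := r - 1 with hpdef
  have hp : 0 ≤ p := by linarith
  set a := ‖x‖
  set b := ‖y‖
  have hb : 0 ≤ b := norm_nonneg y
  have ha : 0 ≤ a := norm_nonneg x
  have hdecomp : (a ^ p : ℝ) • x - (b ^ p : ℝ) • y
      = (a ^ p : ℝ) • (x - y) + (a ^ p - b ^ p : ℝ) • y := by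
    rw [smul_sub, sub_smul]; abel
  have hmono : b ^ p ≤ a ^ p := Real.rpow_le_rpow hb hxy hp
  have hdiff : a - b ≤ ‖x - y‖ := by
    have := abs_norm_sub_norm_le x y
    rw [abs_le] at this; linarith [this.2]
  have h1 : ‖(a ^ p : ℝ) • x - (b ^ p : ℝ) • y‖
      ≤ a ^ p * ‖x - y‖ + (a ^ p - b ^ p) * b := by
    rw [hdecomp]
    calc ‖(a ^ p : ℝ) • (x - y) + (a ^ p - b ^ p : ℝ) • y‖
        ≤ ‖(a ^ p : ℝ) • (x - y)‖ + ‖(a ^ p - b ^ p : ℝ) • y‖ := norm_add_le _ _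
      _ = a ^ p * ‖x - y‖ + (a ^ p - b ^ p) * b := by
          rw [norm_smul, norm_smul, Real.norm_eq_abs, Real.norm_eq_abs,
            abs_of_nonneg (Real.rpow_nonneg ha p), abs_of_nonneg (by linarith)]
  have h2 : (a ^ p - b ^ p) * b ≤ p * a ^ p * ‖x - y‖ := by
    calc (a ^ p - b ^ p) * b = b * (a ^ p - b ^ p) := by ring
      _ ≤ p * a ^ p * (a - b) := key_ineq hb hxy hp
      _ ≤ p * a ^ p * ‖x - y‖ := by
          apply mul_le_mul_of_nonneg_left hdiff
          positivity
  have h3 : a ^ p ≤ (a + b) ^ p := Real.rpow_le_rpow ha (by linarith) hp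
  calc ‖(a ^ p : ℝ) • x - (b ^ p : ℝ) • y‖
      ≤ a ^ p * ‖x - y‖ + p * a ^ p * ‖x - y‖ := by linarith
    _ = (1 + p) * a ^ p * ‖x - y‖ := by ring
    _ ≤ (1 + p) * (a + b) ^ p * ‖x - y‖ := by
        apply mul_le_mul_of_nonneg_right _ (norm_nonneg _)
        apply mul_le_mul_of_nonneg_left h3 (by linarith)
    _ = r * (a + b) ^ p * ‖x - y‖ := by rw [hpdef]; ring_nf

/-- Pointwise local Lipschitz estimate (2.11)/(2.13) for the Forchheimer nonlinearity
`C_r(x) = ‖x‖^(r-1) • x`: for `r ≥ 1`,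
`‖C_r(x) - C_r(y)‖ ≤ r (‖x‖ + ‖y‖)^(r-1) ‖x - y‖`. -/
theorem forchheimer_pointwise_lipschitz
    {E : Type*} [NormedAddCommGroup E] [InnerProductSpace ℝ E]
    (r : ℝ) (hr : 1 ≤ r) (x y : E) :
    ‖(‖x‖ ^ (r - 1) : ℝ) • x - (‖y‖ ^ (r - 1) : ℝ) • y‖
      ≤ r * (‖x‖ + ‖y‖) ^ (r - 1) * ‖x - y‖ := by
  rcases le_total ‖y‖ ‖x‖ with h | h
  · exact forch_aux r hr x y h
  · have := forch_aux r hr y x h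
    rw [norm_sub_rev, add_comm ‖y‖, norm_sub_rev y x] at this
    exact this
end

section
/- For all vectors x, y in a real inner product space E with y ≠ 0, one has ‖ ‖x‖·x − ‖y‖·y − ‖y‖·(x − y) − (⟪y, x − y⟫/‖y‖)·y ‖ ≤ 4‖x − y‖². -/
/-- Pointwise Taylor remainder bound (estimate (3a30)) for the Forchheimer
nonlinearity `C₂(z) = ‖z‖ • z` with absorption exponent `r = 2`: for `y ≠ 0`,
`‖C₂(x) - C₂(y) - C₂′(y)(x - y)‖ ≤ 4‖x - y‖²`. -/
theorem forchheimer_quadratic_taylor_remainder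
    {E : Type*} [NormedAddCommGroup E] [InnerProductSpace ℝ E]
    (x y : E) (hy : y ≠ 0) :
    ‖‖x‖ • x - ‖y‖ • y - ‖y‖ • (x - y) - ((inner ℝ y (x - y) : ℝ) / ‖y‖) • y‖
      ≤ 4 * ‖x - y‖ ^ 2 := by
  have hb : (‖y‖ : ℝ) ≠ 0 := norm_ne_zero_iff.mpr hy
  have hb0 : (0:ℝ) < ‖y‖ := norm_pos_iff.mpr hy
  have hiy : (inner ℝ y (x - y) : ℝ) = inner ℝ y x - ‖y‖ ^ 2 := by
    rw [inner_sub_right, real_inner_self_eq_norm_sq]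
  have key : ‖x‖ • x - ‖y‖ • y - ‖y‖ • (x - y) - ((inner ℝ y (x - y) : ℝ) / ‖y‖) • y
      = (‖x‖ - ‖y‖) • (x - y) + (((‖x‖ * ‖y‖ - inner ℝ y x) : ℝ) / ‖y‖) • y := by
    rw [hiy]
    match_scalars <;> field_simp <;> ring
  rw [key]
  have h1 : ‖(‖x‖ - ‖y‖) • (x - y)‖ ≤ ‖x - y‖ * ‖x - y‖ := by
    rw [norm_smul, Real.norm_eq_abs]
    exact mul_le_mul_of_nonneg_right (abs_norm_sub_norm_le x y) (norm_nonneg _)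
  have hcs : (inner ℝ y x : ℝ) ≤ ‖y‖ * ‖x‖ := real_inner_le_norm y x
  have hexp : ‖x - y‖ ^ 2 = ‖x‖ ^ 2 - 2 * inner ℝ x y + ‖y‖ ^ 2 := by
    exact_mod_cast norm_sub_sq_real x y
  have hsym : (inner ℝ y x : ℝ) = inner ℝ x y := real_inner_comm x y
  have h2 : ‖(((‖x‖ * ‖y‖ - inner ℝ y x) : ℝ) / ‖y‖) • y‖ ≤ ‖x - y‖ ^ 2 := by
    rw [norm_smul, Real.norm_eq_abs]
    have hc : (0:ℝ) ≤ ‖x‖ * ‖y‖ - inner ℝ y x := by nlinarith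
    rw [abs_of_nonneg (div_nonneg hc hb0.le), div_mul_cancel₀ _ hb]
    nlinarith [abs_norm_sub_norm_le x y, sq_abs (‖x‖ - ‖y‖),
      sq_nonneg (‖x‖ - ‖y‖)]
  calc ‖(‖x‖ - ‖y‖) • (x - y) + (((‖x‖ * ‖y‖ - inner ℝ y x) : ℝ) / ‖y‖) • y‖
      ≤ ‖(‖x‖ - ‖y‖) • (x - y)‖ + ‖(((‖x‖ * ‖y‖ - inner ℝ y x) : ℝ) / ‖y‖) • y‖ :=
        norm_add_le _ _
    _ ≤ 4 * ‖x - y‖ ^ 2 := by nlinarith [norm_nonneg (x - y)]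
end

section
/- For all vectors x, y in a real inner product space E, one has ‖ ‖x‖²·x − ‖y‖²·y − ‖y‖²·(x − y) − 2⟪y, x − y⟫·y ‖ ≤ 3·(‖x‖ + ‖y‖)·‖x − y‖². -/
/-- Pointwise Taylor remainder bound (estimate (3b30)) for the cubic Forchheimer
nonlinearity `C₃(z) = ‖z‖² • z` (absorption exponent `r = 3`):
`‖C₃(x) - C₃(y) - C₃′(y)(x - y)‖ ≤ 3(‖x‖ + ‖y‖)‖x - y‖²`. -/
theorem forchheimer_cubic_taylor_remainder
    {E : Type*} [NormedAddCommGroup E] [InnerProductSpace ℝ E] (x y : E) :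
    ‖(‖x‖ ^ 2 : ℝ) • x - (‖y‖ ^ 2 : ℝ) • y - (‖y‖ ^ 2 : ℝ) • (x - y)
        - (2 * (inner ℝ y (x - y) : ℝ)) • y‖
      ≤ 3 * (‖x‖ + ‖y‖) * ‖x - y‖ ^ 2 := by
  have key : (‖x‖ ^ 2 : ℝ) = ‖y‖ ^ 2 + 2 * inner ℝ y (x - y) + ‖x - y‖ ^ 2 := by
    have h := norm_add_sq_real y (x - y)
    simpa using h
  have hv : (‖x‖ ^ 2 : ℝ) • x - (‖y‖ ^ 2 : ℝ) • y - (‖y‖ ^ 2 : ℝ) • (x - y)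
        - (2 * (inner ℝ y (x - y) : ℝ)) • y
      = (2 * (inner ℝ y (x - y) : ℝ)) • (x - y) + (‖x - y‖ ^ 2 : ℝ) • x := by
    rw [key]; module
  rw [hv]
  calc ‖(2 * (inner ℝ y (x - y) : ℝ)) • (x - y) + (‖x - y‖ ^ 2 : ℝ) • x‖
      ≤ ‖(2 * (inner ℝ y (x - y) : ℝ)) • (x - y)‖ + ‖(‖x - y‖ ^ 2 : ℝ) • x‖ :=
        norm_add_le _ _
    _ ≤ 2 * (‖y‖ * ‖x - y‖) * ‖x - y‖ + ‖x - y‖ ^ 2 * ‖x‖ := by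
        rw [norm_smul, norm_smul]
        gcongr
        · rw [norm_mul]
          simp only [Real.norm_ofNat]
          gcongr
          exact (abs_real_inner_le_norm y (x - y))
        · simp [abs_of_nonneg (sq_nonneg ‖x - y‖)]
    _ ≤ 3 * (‖x‖ + ‖y‖) * ‖x - y‖ ^ 2 := by
        nlinarith [norm_nonneg x, norm_nonneg y, sq_nonneg ‖x - y‖]
end

section
/- For all vectors x, y, p in a real inner product space E with x ≠ 0 and y ≠ 0, one has ‖ (‖x‖·p + (⟪x, p⟫/‖x‖)·x) − (‖y‖·p + (⟪y, p⟫/‖y‖)·y) ‖ ≤ 4‖x − y‖·‖p‖. -/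
/-- Pointwise Lipschitz estimate in the base point (bound (3a47)) for the Gateaux
derivative of the Forchheimer nonlinearity `C₂(z) = ‖z‖ • z` (`r = 2`):
for `x ≠ 0` and `y ≠ 0`, `‖C₂′(x)p - C₂′(y)p‖ ≤ 4‖x - y‖‖p‖`. -/
theorem forchheimer_quadratic_derivative_lipschitz
    {E : Type*} [NormedAddCommGroup E] [InnerProductSpace ℝ E]
    (x y p : E) (hx : x ≠ 0) (hy : y ≠ 0) :
    ‖(‖x‖ • p + ((inner ℝ x p : ℝ) / ‖x‖) • x)
        - (‖y‖ • p + ((inner ℝ y p : ℝ) / ‖y‖) • y)‖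
      ≤ 4 * ‖x - y‖ * ‖p‖ := by
  have hxn : (0:ℝ) < ‖x‖ := norm_pos_iff.mpr hx
  have hyn : (0:ℝ) < ‖y‖ := norm_pos_iff.mpr hy
  set u : E := ‖x‖⁻¹ • x with hu
  set v : E := ‖y‖⁻¹ • y with hv
  have hun : ‖u‖ = 1 := norm_smul_inv_norm hx
  have hvn : ‖v‖ = 1 := norm_smul_inv_norm hy
  -- bound on the difference of unit vectors
  have huv : ‖u - v‖ ≤ 2 * ‖x - y‖ / ‖y‖ := by
    have h1 : u - v = ‖y‖⁻¹ • (x - y) + (‖x‖⁻¹ - ‖y‖⁻¹) • x := by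
      simp only [hu, hv, smul_sub, sub_smul]; abel
    have h2 : ‖u - v‖ ≤ ‖x - y‖ / ‖y‖ + |‖x‖⁻¹ - ‖y‖⁻¹| * ‖x‖ := by
      rw [h1]
      calc ‖‖y‖⁻¹ • (x - y) + (‖x‖⁻¹ - ‖y‖⁻¹) • x‖
          ≤ ‖‖y‖⁻¹ • (x - y)‖ + ‖(‖x‖⁻¹ - ‖y‖⁻¹) • x‖ := norm_add_le _ _
        _ = ‖x - y‖ / ‖y‖ + |‖x‖⁻¹ - ‖y‖⁻¹| * ‖x‖ := by
            rw [norm_smul, norm_smul, Real.norm_eq_abs, Real.norm_eq_abs,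
              abs_of_pos (inv_pos.mpr hyn), inv_mul_eq_div]
    have h3 : |‖x‖⁻¹ - ‖y‖⁻¹| * ‖x‖ ≤ ‖x - y‖ / ‖y‖ := by
      have hdiff : ‖x‖⁻¹ - ‖y‖⁻¹ = (‖y‖ - ‖x‖) / (‖x‖ * ‖y‖) := by
        field_simp
      have habs : |‖y‖ - ‖x‖| ≤ ‖x - y‖ :=
        (abs_norm_sub_norm_le y x).trans_eq (norm_sub_rev y x)
      rw [hdiff, abs_div, abs_of_pos (mul_pos hxn hyn)]
      rw [div_mul_eq_mul_div, div_le_div_iff₀ (mul_pos hxn hyn) hyn]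
      rw [← mul_assoc]
      exact mul_le_mul_of_nonneg_right (mul_le_mul_of_nonneg_right habs hxn.le) hyn.le
    rw [mul_div_assoc]
    linarith [h2, h3]
  -- rewrite the inner product coefficients
  have hcx : (inner ℝ x p : ℝ) / ‖x‖ = (inner ℝ u p : ℝ) := by
    rw [hu, real_inner_smul_left]; ring
  have hcy : (inner ℝ y p : ℝ) / ‖y‖ = (inner ℝ v p : ℝ) := by
    rw [hv, real_inner_smul_left]; ring
  rw [hcx, hcy]
  -- decomposition
  have hdecomp :
      (‖x‖ • p + (inner ℝ u p : ℝ) • x) - (‖y‖ • p + (inner ℝ v p : ℝ) • y)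
        = (‖x‖ - ‖y‖) • p + (inner ℝ u p : ℝ) • (x - y)
          + ((inner ℝ u p : ℝ) - (inner ℝ v p : ℝ)) • y := by
    simp only [sub_smul, smul_sub]; abel
  rw [hdecomp]
  have b1 : ‖(‖x‖ - ‖y‖) • p‖ ≤ ‖x - y‖ * ‖p‖ := by
    rw [norm_smul, Real.norm_eq_abs]
    exact mul_le_mul_of_nonneg_right (abs_norm_sub_norm_le x y) (norm_nonneg p)
  have b2 : ‖(inner ℝ u p : ℝ) • (x - y)‖ ≤ ‖x - y‖ * ‖p‖ := by
    rw [norm_smul, Real.norm_eq_abs]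
    have : |(inner ℝ u p : ℝ)| ≤ ‖p‖ := by
      have := abs_real_inner_le_norm u p
      rwa [hun, one_mul] at this
    calc |(inner ℝ u p : ℝ)| * ‖x - y‖ ≤ ‖p‖ * ‖x - y‖ :=
          mul_le_mul_of_nonneg_right this (norm_nonneg _)
      _ = ‖x - y‖ * ‖p‖ := mul_comm _ _
  have b3 : ‖((inner ℝ u p : ℝ) - (inner ℝ v p : ℝ)) • y‖ ≤ 2 * ‖x - y‖ * ‖p‖ := by
    rw [norm_smul, Real.norm_eq_abs]
    have hinner : (inner ℝ u p : ℝ) - (inner ℝ v p : ℝ) = (inner ℝ (u - v) p : ℝ) := by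
      rw [inner_sub_left]
    have : |(inner ℝ u p : ℝ) - (inner ℝ v p : ℝ)| ≤ (2 * ‖x - y‖ / ‖y‖) * ‖p‖ := by
      rw [hinner]
      calc |(inner ℝ (u - v) p : ℝ)| ≤ ‖u - v‖ * ‖p‖ := abs_real_inner_le_norm _ _
        _ ≤ (2 * ‖x - y‖ / ‖y‖) * ‖p‖ :=
            mul_le_mul_of_nonneg_right huv (norm_nonneg _)
    calc |(inner ℝ u p : ℝ) - (inner ℝ v p : ℝ)| * ‖y‖
        ≤ (2 * ‖x - y‖ / ‖y‖) * ‖p‖ * ‖y‖ :=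
          mul_le_mul_of_nonneg_right this (norm_nonneg _)
      _ = 2 * ‖x - y‖ * ‖p‖ := by field_simp
  calc ‖(‖x‖ - ‖y‖) • p + (inner ℝ u p : ℝ) • (x - y)
          + ((inner ℝ u p : ℝ) - (inner ℝ v p : ℝ)) • y‖
      ≤ ‖(‖x‖ - ‖y‖) • p‖ + ‖(inner ℝ u p : ℝ) • (x - y)‖
          + ‖((inner ℝ u p : ℝ) - (inner ℝ v p : ℝ)) • y‖ := norm_add₃_le
    _ ≤ 4 * ‖x - y‖ * ‖p‖ := by linarith
end

section
/- Let (X, μ) be a measure space, E a real inner product space, and r ≥ 1 a real number. If f, g : X → E are measurable with ‖f‖_{L^{r+1}(μ)} < ∞ and ‖g‖_{L^{r+1}(μ)} < ∞, then the function x ↦ ‖f(x)‖^(r-1)·f(x) − ‖g(x)‖^(r-1)·g(x) satisfies ‖ ‖f‖^(r-1)f − ‖g‖^(r-1)g ‖_{L^{(r+1)/r}(μ)} ≤ r · (‖f‖_{L^{r+1}(μ)} + ‖g‖_{L^{r+1}(μ)})^(r-1) · ‖f − g‖_{L^{r+1}(μ)}. -/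
open MeasureTheory

/-- Scalar key inequality: for `0 ≤ t ≤ s` and `0 ≤ p`,
`(s^p - t^p) * t ≤ p * s^p * (s - t)`. -/
lemma forchheimer_scalar_aux {p s t : ℝ} (hp : 0 ≤ p) (ht : 0 ≤ t) (hts : t ≤ s) :
    (s ^ p - t ^ p) * t ≤ p * s ^ p * (s - t) := by
  rcases eq_or_lt_of_le hts with rfl | hts'
  · simp
  rcases eq_or_lt_of_le ht with rfl | ht'
  · simp only [sub_zero, mul_zero, Real.rpow_zero]
    positivity
  rcases eq_or_lt_of_le hp with rfl | hp'
  · rw [Real.rpow_zero, Real.rpow_zero]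
    norm_num
  have hs0 : 0 < s := lt_trans ht' hts'
  -- Mean value theorem for x ↦ x ^ p on [t, s]
  obtain ⟨c, hc, hc'⟩ := exists_hasDerivAt_eq_slope (fun x => x ^ p)
      (fun x => p * x ^ (p - 1)) hts'
    (fun x hx => by
      have hx0 : x ≠ 0 := by
        have : (0:ℝ) < x := lt_of_lt_of_le ht' hx.1
        exact this.ne'
      exact (Real.hasDerivAt_rpow_const (Or.inl hx0)).continuousAt.continuousWithinAt)
    (fun x hx => Real.hasDerivAt_rpow_const (Or.inl (lt_trans ht' hx.1).ne'))
  have hkey : s ^ p - t ^ p = p * c ^ (p - 1) * (s - t) := by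
    rw [eq_div_iff (sub_ne_zero.mpr hts'.ne')] at hc'
    linarith [hc']
  have hc0 : 0 < c := lt_trans ht' hc.1
  have hmain : c ^ (p - 1) * t ≤ s ^ p := by
    rcases le_or_gt 1 p with h1 | h1
    · have h2 : c ^ (p - 1) ≤ s ^ (p - 1) :=
        Real.rpow_le_rpow (le_of_lt hc0) (le_of_lt hc.2) (by linarith)
      calc c ^ (p - 1) * t ≤ s ^ (p - 1) * s :=
            mul_le_mul h2 hts (le_of_lt ht') (Real.rpow_nonneg (le_of_lt hs0) _)
        _ = s ^ p := by
            rw [← Real.rpow_add_one hs0.ne' (p - 1)]; ring_nf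
    · have h2 : c ^ (p - 1) ≤ t ^ (p - 1) :=
        Real.rpow_le_rpow_of_nonpos ht' (le_of_lt hc.1) (by linarith)
      calc c ^ (p - 1) * t ≤ t ^ (p - 1) * t :=
            mul_le_mul_of_nonneg_right h2 ht
        _ = t ^ p := by rw [← Real.rpow_add_one ht'.ne' (p - 1)]; ring_nf
        _ ≤ s ^ p := Real.rpow_le_rpow ht hts hp
  rw [hkey]
  have hst : (0:ℝ) ≤ s - t := by linarith
  nlinarith [mul_le_mul_of_nonneg_right hmain (mul_nonneg hp hst)]

/-- Pointwise inequality (ordered case). -/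
lemma forchheimer_pointwise_aux {E : Type*} [NormedAddCommGroup E] [NormedSpace ℝ E]
    {p : ℝ} (hp : 0 ≤ p) (a b : E) (hba : ‖b‖ ≤ ‖a‖) :
    ‖(‖a‖ ^ p : ℝ) • a - (‖b‖ ^ p : ℝ) • b‖ ≤ (1 + p) * (‖a‖ + ‖b‖) ^ p * ‖a - b‖ := by
  have key : (‖a‖ ^ p : ℝ) • a - (‖b‖ ^ p : ℝ) • b
      = (‖a‖ ^ p : ℝ) • (a - b) + ((‖a‖ ^ p - ‖b‖ ^ p : ℝ)) • b := by
    rw [smul_sub, sub_smul]; abel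
  have hpow : ‖b‖ ^ p ≤ ‖a‖ ^ p := Real.rpow_le_rpow (norm_nonneg b) hba hp
  calc ‖(‖a‖ ^ p : ℝ) • a - (‖b‖ ^ p : ℝ) • b‖
      ≤ ‖(‖a‖ ^ p : ℝ) • (a - b)‖ + ‖((‖a‖ ^ p - ‖b‖ ^ p : ℝ)) • b‖ := by
        rw [key]; exact norm_add_le _ _
    _ = ‖a‖ ^ p * ‖a - b‖ + (‖a‖ ^ p - ‖b‖ ^ p) * ‖b‖ := by
        rw [norm_smul, norm_smul, Real.norm_of_nonneg (Real.rpow_nonneg (norm_nonneg a) p),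
          Real.norm_of_nonneg (by linarith : (0:ℝ) ≤ ‖a‖ ^ p - ‖b‖ ^ p)]
    _ ≤ ‖a‖ ^ p * ‖a - b‖ + p * ‖a‖ ^ p * (‖a‖ - ‖b‖) :=
        add_le_add_right (forchheimer_scalar_aux hp (norm_nonneg b) hba) _
    _ ≤ ‖a‖ ^ p * ‖a - b‖ + p * ‖a‖ ^ p * ‖a - b‖ :=
        add_le_add_right (mul_le_mul_of_nonneg_left (norm_sub_norm_le a b)
          (mul_nonneg hp (Real.rpow_nonneg (norm_nonneg a) p))) _
    _ = (1 + p) * ‖a‖ ^ p * ‖a - b‖ := by ring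
    _ ≤ (1 + p) * (‖a‖ + ‖b‖) ^ p * ‖a - b‖ := by
        have : ‖a‖ ^ p ≤ (‖a‖ + ‖b‖) ^ p :=
          Real.rpow_le_rpow (norm_nonneg a) (by linarith [norm_nonneg b]) hp
        have h1p : (0:ℝ) ≤ 1 + p := by linarith
        exact mul_le_mul_of_nonneg_right
          (mul_le_mul_of_nonneg_left this h1p) (norm_nonneg _)

/-- Pointwise inequality. -/
lemma forchheimer_pointwise {E : Type*} [NormedAddCommGroup E] [NormedSpace ℝ E]
    {p : ℝ} (hp : 0 ≤ p) (a b : E) :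
    ‖(‖a‖ ^ p : ℝ) • a - (‖b‖ ^ p : ℝ) • b‖ ≤ (1 + p) * (‖a‖ + ‖b‖) ^ p * ‖a - b‖ := by
  rcases le_total ‖b‖ ‖a‖ with h | h
  · exact forchheimer_pointwise_aux hp a b h
  · rw [norm_sub_rev, norm_sub_rev a b, add_comm ‖a‖]
    exact forchheimer_pointwise_aux hp b a h

/-- Local Lipschitz estimate (2.13) for the Forchheimer nonlinearity
`C_r(u) = ‖u‖^(r-1) • u` from `L^{r+1}(μ)` into `L^{(r+1)/r}(μ)`: for `r ≥ 1`
and `f, g` measurable with finite `L^{r+1}` norms,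
`‖C_r(f) - C_r(g)‖_{L^{(r+1)/r}} ≤ r (‖f‖_{L^{r+1}} + ‖g‖_{L^{r+1}})^{r-1} ‖f - g‖_{L^{r+1}}`. -/
theorem forchheimer_Lp_lipschitz
    {X : Type*} [MeasurableSpace X] (μ : Measure X)
    {E : Type*} [NormedAddCommGroup E] [InnerProductSpace ℝ E]
    (r : ℝ) (hr : 1 ≤ r) (f g : X → E)
    (hf : AEStronglyMeasurable f μ) (hg : AEStronglyMeasurable g μ)
    (hf' : eLpNorm f (ENNReal.ofReal (r + 1)) μ < ⊤)
    (hg' : eLpNorm g (ENNReal.ofReal (r + 1)) μ < ⊤) :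
    eLpNorm (fun x => (‖f x‖ ^ (r - 1) : ℝ) • f x - (‖g x‖ ^ (r - 1) : ℝ) • g x)
        (ENNReal.ofReal ((r + 1) / r)) μ
      ≤ ENNReal.ofReal r
          * (eLpNorm f (ENNReal.ofReal (r + 1)) μ
              + eLpNorm g (ENNReal.ofReal (r + 1)) μ) ^ (r - 1)
          * eLpNorm (f - g) (ENNReal.ofReal (r + 1)) μ := by
  rcases eq_or_lt_of_le hr with rfl | hr'
  · -- case r = 1
    simp only [sub_self, Real.rpow_zero, one_smul, ENNReal.rpow_zero,
      ENNReal.ofReal_one, one_mul, mul_one]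
    norm_num
    exact le_rfl
  -- case 1 < r
  have hr0 : (0:ℝ) < r := by linarith
  have hrm : (0:ℝ) < r - 1 := by linarith
  have hrp : (0:ℝ) < r + 1 := by linarith
  set q : ENNReal := ENNReal.ofReal (r + 1) with hq
  set q' : ENNReal := ENNReal.ofReal ((r + 1) / (r - 1)) with hq'
  set p1 : ENNReal := ENNReal.ofReal ((r + 1) / r) with hp1
  set F : X → ℝ := fun x => ‖f x‖ + ‖g x‖ with hF
  set φ : X → ℝ := fun x => r * (‖f x‖ + ‖g x‖) ^ (r - 1) with hφ
  have hFmeas : AEStronglyMeasurable F μ := hf.norm.add hg.norm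
  have hφmeas : AEStronglyMeasurable φ μ := by
    have hc : Continuous (fun y : ℝ => r * y ^ (r - 1)) :=
      continuous_const.mul (Real.continuous_rpow_const hrm.le)
    exact hc.comp_aestronglyMeasurable hFmeas
  -- exponent identity
  have hpqr : 1 / p1 = 1 / q' + 1 / q := by
    rw [hp1, hq', hq, one_div, one_div, one_div,
      ← ENNReal.ofReal_inv_of_pos (by positivity),
      ← ENNReal.ofReal_inv_of_pos (by positivity),
      ← ENNReal.ofReal_inv_of_pos (by positivity),
      ← ENNReal.ofReal_add (by positivity) (by positivity)]
    congr 1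
    rw [inv_div, inv_div]
    field_simp
    ring
  -- Step 1: pointwise estimate
  have step1 : eLpNorm
      (fun x => (‖f x‖ ^ (r - 1) : ℝ) • f x - (‖g x‖ ^ (r - 1) : ℝ) • g x) p1 μ
      ≤ eLpNorm (φ • (f - g)) p1 μ := by
    apply eLpNorm_mono
    intro x
    have h := forchheimer_pointwise (p := r - 1) hrm.le (f x) (g x)
    have hφpos : 0 ≤ φ x := by
      simp only [hφ]
      positivity
    calc ‖(‖f x‖ ^ (r - 1) : ℝ) • f x - (‖g x‖ ^ (r - 1) : ℝ) • g x‖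
        ≤ (1 + (r - 1)) * (‖f x‖ + ‖g x‖) ^ (r - 1) * ‖f x - g x‖ := h
      _ = φ x * ‖f x - g x‖ := by simp only [hφ]; ring_nf
      _ = ‖(φ • (f - g)) x‖ := by
          rw [Pi.smul_apply', Pi.sub_apply, norm_smul, Real.norm_of_nonneg hφpos]
  -- Step 2: Hölder
  have step2 : eLpNorm (φ • (f - g)) p1 μ ≤ eLpNorm φ q' μ * eLpNorm (f - g) q μ :=
    eLpNorm_smul_le_mul_eLpNorm (hpqr := ⟨by simpa only [one_div] using hpqr.symm⟩) (hf.sub hg) hφmeas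
  -- Step 3: pull out the constant r and rewrite the power
  have step3 : eLpNorm φ q' μ = ENNReal.ofReal r * eLpNorm F q μ ^ (r - 1) := by
    have hφeq : φ = (r : ℝ) • (fun x => ‖F x‖ ^ (r - 1)) := by
      funext x
      simp only [Pi.smul_apply, smul_eq_mul, hφ, hF,
        Real.norm_of_nonneg (by positivity : (0:ℝ) ≤ ‖f x‖ + ‖g x‖)]
    rw [hφeq, eLpNorm_const_smul, eLpNorm_norm_rpow F hrm]
    congr 1
    · exact Real.enorm_eq_ofReal hr0.le
    · congr 1
      rw [hq', hq, ← ENNReal.ofReal_mul (by positivity)]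
      congr 1
      field_simp
  -- Step 4: triangle inequality for F
  have step4 : eLpNorm F q μ
      ≤ eLpNorm f q μ + eLpNorm g q μ := by
    have : eLpNorm F q μ ≤ eLpNorm (fun x => ‖f x‖) q μ + eLpNorm (fun x => ‖g x‖) q μ :=
      eLpNorm_add_le hf.norm hg.norm (ENNReal.one_le_ofReal.mpr (by linarith))
    rwa [eLpNorm_norm, eLpNorm_norm] at this
  refine le_trans (step1.trans step2) ?_
  rw [step3]
  gcongr
end

section
/- Let (X, μ) be a measure space, E a real inner product space, and r ≥ 1 a real number. If f, g : X → E are measurable with ‖f‖_{L^{r+1}(μ)} < ∞ and ‖g‖_{L^{r+1}(μ)} < ∞, then ∫_X ⟪‖f(x)‖^(r-1)·f(x) − ‖g(x)‖^(r-1)·g(x), f(x) − g(x)⟫ dμ(x) ≥ (1/2)∫_X ‖f(x)‖^(r-1)‖f(x) − g(x)‖² dμ(x) + (1/2)∫_X ‖g(x)‖^(r-1)‖f(x) − g(x)‖² dμ(x), all three integrals being finite and nonnegative. -/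
open MeasureTheory

lemma forch_max_rpow_le (s : ℝ) (_hs : 0 ≤ s) (a b : ℝ) (ha : 0 ≤ a) (hb : 0 ≤ b) :
    (max a b) ^ s ≤ a ^ s + b ^ s := by
  rcases max_cases a b with ⟨h, _⟩ | ⟨h, _⟩ <;> rw [h]
  · exact le_add_of_nonneg_right (Real.rpow_nonneg hb s)
  · exact le_add_of_nonneg_left (Real.rpow_nonneg ha s)

lemma forch_rpow_succ (r : ℝ) (hr : 1 ≤ r) (a : ℝ) (ha : 0 ≤ a) :
    a ^ (r - 1) * a = a ^ r := by
  calc a ^ (r-1) * a = a ^ (r-1) * a ^ (1:ℝ) := by rw [Real.rpow_one]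
    _ = a ^ ((r-1) + 1) := (Real.rpow_add' ha (by linarith)).symm
    _ = a ^ r := by ring_nf

lemma forch_pointwise {E : Type*} [NormedAddCommGroup E] [InnerProductSpace ℝ E]
    (r : ℝ) (hr : 1 ≤ r) (a b : E) :
    (1/2 : ℝ) * (‖a‖ ^ (r-1) * ‖a - b‖ ^ 2) + (1/2 : ℝ) * (‖b‖ ^ (r-1) * ‖a - b‖ ^ 2)
      ≤ (inner ℝ ((‖a‖ ^ (r - 1) : ℝ) • a - (‖b‖ ^ (r - 1) : ℝ) • b) (a - b) : ℝ) := by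
  have hmono : 0 ≤ (‖a‖ ^ (r-1) - ‖b‖ ^ (r-1)) * (‖a‖ ^ 2 - ‖b‖ ^ 2) := by
    rcases le_total ‖a‖ ‖b‖ with h | h
    · have h1 : ‖a‖ ^ (r-1) ≤ ‖b‖ ^ (r-1) := Real.rpow_le_rpow (norm_nonneg a) h (by linarith)
      have h2 : ‖a‖ ^ 2 ≤ ‖b‖ ^ 2 := pow_le_pow_left₀ (norm_nonneg a) h 2
      nlinarith
    · have h1 : ‖b‖ ^ (r-1) ≤ ‖a‖ ^ (r-1) := Real.rpow_le_rpow (norm_nonneg b) h (by linarith)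
      have h2 : ‖b‖ ^ 2 ≤ ‖a‖ ^ 2 := pow_le_pow_left₀ (norm_nonneg b) h 2
      nlinarith
  have expand : (inner ℝ ((‖a‖ ^ (r - 1) : ℝ) • a - (‖b‖ ^ (r - 1) : ℝ) • b) (a - b) : ℝ)
      = ‖a‖ ^ (r-1) * (‖a‖ ^ 2 - (inner ℝ a b : ℝ))
        - ‖b‖ ^ (r-1) * ((inner ℝ a b : ℝ) - ‖b‖ ^ 2) := by
    simp only [inner_sub_left, inner_sub_right, real_inner_smul_left,
      real_inner_self_eq_norm_sq, real_inner_comm b a]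
    ring
  have hns : ‖a - b‖ ^ 2 = ‖a‖ ^ 2 - 2 * (inner ℝ a b : ℝ) + ‖b‖ ^ 2 := norm_sub_sq_real a b
  rw [expand, hns]
  nlinarith

/-- Integrated monotonicity estimate (2.23) for the Forchheimer nonlinearity
`C_r(u) = ‖u‖^(r-1) • u`: for `r ≥ 1` and `f, g` measurable with finite
`L^{r+1}(μ)` norms, the functions
`x ↦ ⟪C_r(f x) - C_r(g x), f x - g x⟫`, `x ↦ ‖f x‖^(r-1)‖f x - g x‖²` and
`x ↦ ‖g x‖^(r-1)‖f x - g x‖²` are integrable, their integrals are nonnegative,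
and `∫ ⟪C_r(f) - C_r(g), f - g⟫ ≥ ½∫‖f‖^(r-1)‖f-g‖² + ½∫‖g‖^(r-1)‖f-g‖²`. -/
theorem forchheimer_integrated_monotonicity
    {X : Type*} [MeasurableSpace X] (μ : Measure X)
    {E : Type*} [NormedAddCommGroup E] [InnerProductSpace ℝ E]
    (r : ℝ) (hr : 1 ≤ r) (f g : X → E)
    (hf : AEStronglyMeasurable f μ) (hg : AEStronglyMeasurable g μ)
    (hf' : eLpNorm f (ENNReal.ofReal (r + 1)) μ < ⊤)
    (hg' : eLpNorm g (ENNReal.ofReal (r + 1)) μ < ⊤) :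
    Integrable (fun x =>
        (inner ℝ ((‖f x‖ ^ (r - 1) : ℝ) • f x - (‖g x‖ ^ (r - 1) : ℝ) • g x)
          (f x - g x) : ℝ)) μ
    ∧ Integrable (fun x => ‖f x‖ ^ (r - 1) * ‖f x - g x‖ ^ 2) μ
    ∧ Integrable (fun x => ‖g x‖ ^ (r - 1) * ‖f x - g x‖ ^ 2) μ
    ∧ (0 : ℝ) ≤ ∫ x, (inner ℝ ((‖f x‖ ^ (r - 1) : ℝ) • f x - (‖g x‖ ^ (r - 1) : ℝ) • g x)
          (f x - g x) : ℝ) ∂μ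
    ∧ (0 : ℝ) ≤ ∫ x, ‖f x‖ ^ (r - 1) * ‖f x - g x‖ ^ 2 ∂μ
    ∧ (0 : ℝ) ≤ ∫ x, ‖g x‖ ^ (r - 1) * ‖f x - g x‖ ^ 2 ∂μ
    ∧ (1 / 2 : ℝ) * ∫ x, ‖f x‖ ^ (r - 1) * ‖f x - g x‖ ^ 2 ∂μ
        + (1 / 2 : ℝ) * ∫ x, ‖g x‖ ^ (r - 1) * ‖f x - g x‖ ^ 2 ∂μ
      ≤ ∫ x, (inner ℝ ((‖f x‖ ^ (r - 1) : ℝ) • f x - (‖g x‖ ^ (r - 1) : ℝ) • g x)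
          (f x - g x) : ℝ) ∂μ := by
  have hr1 : (0:ℝ) < r + 1 := by linarith
  have hp0 : (ENNReal.ofReal (r+1)) ≠ 0 := by
    simp only [ne_eq, ENNReal.ofReal_eq_zero, not_le]; linarith
  have hpt : (ENNReal.ofReal (r+1)) ≠ ⊤ := ENNReal.ofReal_ne_top
  have htr : (ENNReal.ofReal (r+1)).toReal = r + 1 := ENNReal.toReal_ofReal hr1.le
  have hfint : Integrable (fun x => ‖f x‖ ^ (r+1)) μ := by
    have := MemLp.integrable_norm_rpow ⟨hf, hf'⟩ hp0 hpt
    rwa [htr] at this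
  have hgint : Integrable (fun x => ‖g x‖ ^ (r+1)) μ := by
    have := MemLp.integrable_norm_rpow ⟨hg, hg'⟩ hp0 hpt
    rwa [htr] at this
  set h : X → ℝ := fun x => (2:ℝ) ^ (r+1) * (‖f x‖ ^ (r+1) + ‖g x‖ ^ (r+1)) with hh
  have hint : Integrable h μ := (hfint.add hgint).const_mul _
  have hbound : ∀ x : X, ‖f x‖ ^ (r-1) * ‖f x - g x‖ ^ 2 ≤ h x
      ∧ ‖g x‖ ^ (r-1) * ‖f x - g x‖ ^ 2 ≤ h x
      ∧ |(inner ℝ ((‖f x‖ ^ (r - 1) : ℝ) • f x - (‖g x‖ ^ (r - 1) : ℝ) • g x)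
          (f x - g x) : ℝ)| ≤ h x := by
    intro x
    set a := ‖f x‖ with ha
    set b := ‖g x‖ with hb
    have ha0 : 0 ≤ a := norm_nonneg _
    have hb0 : 0 ≤ b := norm_nonneg _
    set m := max a b with hm
    have hm0 : 0 ≤ m := le_max_of_le_left ha0
    have hdiff : ‖f x - g x‖ ≤ a + b := norm_sub_le _ _
    have hd0 : (0:ℝ) ≤ ‖f x - g x‖ := norm_nonneg _
    have hab2m : a + b ≤ 2 * m := by
      have h1 := le_max_left a b; have h2 := le_max_right a b; linarith
    have hmr : m ^ (r+1) ≤ a ^ (r+1) + b ^ (r+1) :=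
      forch_max_rpow_le (r+1) hr1.le a b ha0 hb0
    have key2 : (2*m) ^ (r+1) ≤ h x := by
      rw [Real.mul_rpow (by norm_num) hm0, hh]
      exact mul_le_mul_of_nonneg_left hmr (Real.rpow_nonneg (by norm_num) _)
    have hsum : (a + b) ^ (r+1) ≤ h x :=
      le_trans (Real.rpow_le_rpow (by linarith) hab2m hr1.le) key2
    have hnormbound : ∀ c : ℝ, 0 ≤ c → c ≤ a + b →
        c ^ (r-1) * ‖f x - g x‖ ^ 2 ≤ h x := by
      intro c hc0 hc
      calc c ^ (r-1) * ‖f x - g x‖ ^ 2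
          ≤ (a+b) ^ (r-1) * (a+b) ^ 2 := by
            apply mul_le_mul (Real.rpow_le_rpow hc0 hc (by linarith))
              (pow_le_pow_left₀ hd0 hdiff 2) (by positivity) (by positivity)
        _ = (a+b) ^ (r-1) * ((a+b) * (a+b)) := by ring
        _ = (a+b) ^ (r-1) * (a+b) * (a+b) := by ring
        _ = (a+b) ^ r * (a+b) := by rw [forch_rpow_succ r hr (a+b) (by linarith)]
        _ = (a+b) ^ ((r+1) - 1) * (a+b) := by ring_nf
        _ = (a+b) ^ (r+1) := forch_rpow_succ (r+1) (by linarith) (a+b) (by linarith)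
        _ ≤ h x := hsum
    refine ⟨hnormbound a ha0 (by linarith), hnormbound b hb0 (by linarith), ?_⟩
    have habs := abs_real_inner_le_norm
      ((‖f x‖ ^ (r - 1) : ℝ) • f x - (‖g x‖ ^ (r - 1) : ℝ) • g x) (f x - g x)
    have hnf : ‖(‖f x‖ ^ (r - 1) : ℝ) • f x‖ = a ^ r := by
      rw [norm_smul, Real.norm_eq_abs, abs_of_nonneg (Real.rpow_nonneg ha0 _), ← ha,
        forch_rpow_succ r hr a ha0]
    have hng : ‖(‖g x‖ ^ (r - 1) : ℝ) • g x‖ = b ^ r := by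
      rw [norm_smul, Real.norm_eq_abs, abs_of_nonneg (Real.rpow_nonneg hb0 _), ← hb,
        forch_rpow_succ r hr b hb0]
    have hu : ‖(‖f x‖ ^ (r - 1) : ℝ) • f x - (‖g x‖ ^ (r - 1) : ℝ) • g x‖ ≤ a ^ r + b ^ r := by
      calc ‖(‖f x‖ ^ (r - 1) : ℝ) • f x - (‖g x‖ ^ (r - 1) : ℝ) • g x‖
          ≤ ‖(‖f x‖ ^ (r - 1) : ℝ) • f x‖ + ‖(‖g x‖ ^ (r - 1) : ℝ) • g x‖ := norm_sub_le _ _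
        _ = a ^ r + b ^ r := by rw [hnf, hng]
    have har : a ^ r ≤ m ^ r := Real.rpow_le_rpow ha0 (le_max_left a b) (by linarith)
    have hbr : b ^ r ≤ m ^ r := Real.rpow_le_rpow hb0 (le_max_right a b) (by linarith)
    have hmrpos : 0 ≤ m ^ r := Real.rpow_nonneg hm0 _
    have hfour : (4:ℝ) ≤ 2 ^ (r+1) := by
      have : (2:ℝ) ^ (2:ℝ) ≤ 2 ^ (r+1) :=
        Real.rpow_le_rpow_of_exponent_le (by norm_num) (by linarith)
      have h4 : (2:ℝ) ^ (2:ℝ) = 4 := by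
        rw [show (2:ℝ) = ((2:ℕ):ℝ) by norm_num, Real.rpow_natCast]; norm_num
      linarith [h4 ▸ this]
    have hmm : m ^ r * m = m ^ (r+1) := by
      have := forch_rpow_succ (r+1) (by linarith) m hm0
      calc m ^ r * m = m ^ ((r+1)-1) * m := by ring_nf
        _ = m ^ (r+1) := this
    calc |(inner ℝ ((‖f x‖ ^ (r - 1) : ℝ) • f x - (‖g x‖ ^ (r - 1) : ℝ) • g x) (f x - g x) : ℝ)|
        ≤ ‖(‖f x‖ ^ (r - 1) : ℝ) • f x - (‖g x‖ ^ (r - 1) : ℝ) • g x‖ * ‖f x - g x‖ := habs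
      _ ≤ (a ^ r + b ^ r) * (a + b) := by
          apply mul_le_mul hu (by linarith) hd0 (by positivity)
      _ ≤ (2 * m ^ r) * (2 * m) := by
          apply mul_le_mul (by linarith) hab2m (by linarith) (by positivity)
      _ = 4 * (m ^ r * m) := by ring
      _ = 4 * m ^ (r+1) := by rw [hmm]
      _ ≤ 2 ^ (r+1) * (a ^ (r+1) + b ^ (r+1)) := by
          have hm1 : 0 ≤ m ^ (r+1) := Real.rpow_nonneg hm0 _
          nlinarith [hmr, hfour]
      _ = h x := rfl
  -- measurability
  have hrc : Continuous (fun t : ℝ => t ^ (r-1)) :=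
    Real.continuous_rpow_const (by linarith)
  have hrf : AEStronglyMeasurable (fun x => ‖f x‖ ^ (r-1)) μ :=
    hrc.comp_aestronglyMeasurable hf.norm
  have hrg : AEStronglyMeasurable (fun x => ‖g x‖ ^ (r-1)) μ :=
    hrc.comp_aestronglyMeasurable hg.norm
  have hsq : AEStronglyMeasurable (fun x => ‖f x - g x‖ ^ 2) μ :=
    (continuous_pow 2).comp_aestronglyMeasurable (hf.sub hg).norm
  have hFm : AEStronglyMeasurable (fun x => ‖f x‖ ^ (r-1) * ‖f x - g x‖ ^ 2) μ :=
    hrf.mul hsq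
  have hGm : AEStronglyMeasurable (fun x => ‖g x‖ ^ (r-1) * ‖f x - g x‖ ^ 2) μ :=
    hrg.mul hsq
  have hCf : AEStronglyMeasurable (fun x => (‖f x‖ ^ (r - 1) : ℝ) • f x) μ :=
    hrf.smul hf
  have hCg : AEStronglyMeasurable (fun x => (‖g x‖ ^ (r - 1) : ℝ) • g x) μ :=
    hrg.smul hg
  have hIm : AEStronglyMeasurable (fun x =>
      (inner ℝ ((‖f x‖ ^ (r - 1) : ℝ) • f x - (‖g x‖ ^ (r - 1) : ℝ) • g x)
        (f x - g x) : ℝ)) μ := (hCf.sub hCg).inner (hf.sub hg)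
  -- nonnegativity pointwise
  have hFpos : ∀ x, (0:ℝ) ≤ ‖f x‖ ^ (r-1) * ‖f x - g x‖ ^ 2 := fun x => by positivity
  have hGpos : ∀ x, (0:ℝ) ≤ ‖g x‖ ^ (r-1) * ‖f x - g x‖ ^ 2 := fun x => by positivity
  have hpw : ∀ x, (1/2 : ℝ) * (‖f x‖ ^ (r-1) * ‖f x - g x‖ ^ 2)
      + (1/2 : ℝ) * (‖g x‖ ^ (r-1) * ‖f x - g x‖ ^ 2)
      ≤ (inner ℝ ((‖f x‖ ^ (r - 1) : ℝ) • f x - (‖g x‖ ^ (r - 1) : ℝ) • g x)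
        (f x - g x) : ℝ) := fun x => forch_pointwise r hr (f x) (g x)
  have hIpos : ∀ x, (0:ℝ) ≤ (inner ℝ ((‖f x‖ ^ (r - 1) : ℝ) • f x
      - (‖g x‖ ^ (r - 1) : ℝ) • g x) (f x - g x) : ℝ) := fun x => by
    have := hpw x; have := hFpos x; have := hGpos x; linarith
  -- integrability via domination
  have hFint : Integrable (fun x => ‖f x‖ ^ (r-1) * ‖f x - g x‖ ^ 2) μ := by
    refine hint.mono' hFm (Filter.Eventually.of_forall fun x => ?_)
    rw [Real.norm_eq_abs, abs_of_nonneg (hFpos x)]; exact (hbound x).1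
  have hGint : Integrable (fun x => ‖g x‖ ^ (r-1) * ‖f x - g x‖ ^ 2) μ := by
    refine hint.mono' hGm (Filter.Eventually.of_forall fun x => ?_)
    rw [Real.norm_eq_abs, abs_of_nonneg (hGpos x)]; exact (hbound x).2.1
  have hIint : Integrable (fun x =>
      (inner ℝ ((‖f x‖ ^ (r - 1) : ℝ) • f x - (‖g x‖ ^ (r - 1) : ℝ) • g x)
        (f x - g x) : ℝ)) μ := by
    refine hint.mono' hIm (Filter.Eventually.of_forall fun x => ?_)
    rw [Real.norm_eq_abs]; exact (hbound x).2.2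
  refine ⟨hIint, hFint, hGint,
    integral_nonneg hIpos, integral_nonneg hFpos, integral_nonneg hGpos, ?_⟩
  have hmain : ∫ x, ((1/2 : ℝ) * (‖f x‖ ^ (r-1) * ‖f x - g x‖ ^ 2)
      + (1/2 : ℝ) * (‖g x‖ ^ (r-1) * ‖f x - g x‖ ^ 2)) ∂μ
      ≤ ∫ x, (inner ℝ ((‖f x‖ ^ (r - 1) : ℝ) • f x - (‖g x‖ ^ (r - 1) : ℝ) • g x)
        (f x - g x) : ℝ) ∂μ :=
    integral_mono ((hFint.const_mul _).add (hGint.const_mul _)) hIint hpw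
  rwa [integral_add (hFint.const_mul _) (hGint.const_mul _),
    integral_const_mul, integral_const_mul] at hmain
end
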